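/- Let p be a prime and n a positive integer. Set K = ⌊n/(p−1)⌋ and S_p(n) = Σ_{k=1}^{K} C(n, k(p−1)). Then S_p(n) ≡ 0 (mod p) if (p−1) does not divide n, and S_p(n) ≡ 1 (mod p) if (p−1) divides n. -/

import Mathlib

open Finset

theorem jenkins_binomial_sum_mod_p (p n : ℕ) (hp : p.Prime) (hn : 0 < n) :
    (¬ (p - 1) ∣ n →
      ((∑ k ∈ Finset.Icc 1 (n / (p - 1)), n.choose (k * (p - 1)) : ℕ) : ZMod p) = 0) ∧
    ((p - 1) ∣ n →
      ((∑ k ∈ Finset.Icc 1 (n / (p - 1)), n.choose (k * (p - 1)) : ℕ) : ZMod p) = 1) := by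
  classical
  haveI : Fact p.Prime := ⟨hp⟩
  have hp2 := hp.two_le
  have hcard : Fintype.card (ZMod p) = p := ZMod.card p
  have hp1 : 0 < p - 1 := by omega
  have hins : ∀ m : ℕ, range (m + 1) = insert 0 (Finset.Icc 1 m) := by
    intro m
    ext x
    simp only [mem_range, mem_insert, mem_Icc]
    omega
  set K := n / (p - 1) with hK
  set S : ZMod p := ((∑ k ∈ Finset.Icc 1 K, n.choose (k * (p - 1)) : ℕ) : ZMod p) with hS
  suffices h : S = if (p - 1) ∣ n then 1 else 0 by
    constructor <;> intro hd <;> simp only [h] <;> simp [hd]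
  have hunits : ∀ i : ℕ, (∑ x : (ZMod p)ˣ, ((x : ZMod p) ^ i)) =
      if (p - 1) ∣ i then -1 else 0 := by
    intro i
    have := FiniteField.sum_pow_units (ZMod p) i
    rwa [hcard] at this
  have hembed : (univ.map ⟨fun x : (ZMod p)ˣ => (x : ZMod p), Units.val_injective⟩)
      = univ \ {(0 : ZMod p)} := by
    ext x
    simpa only [mem_map, mem_univ, Function.Embedding.coeFn_mk, true_and, mem_sdiff,
      mem_singleton] using (show (∃ a : (ZMod p)ˣ, (a : ZMod p) = x) ↔ ¬x = 0 from isUnit_iff_ne_zero)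
  have hfield : (∑ b : ZMod p, b ^ n) = if (p - 1) ∣ n then -1 else 0 := by
    rw [← hunits n]
    calc ∑ b : ZMod p, b ^ n = ∑ b ∈ univ \ {(0 : ZMod p)}, b ^ n := by
          rw [← sum_sdiff (({0} : Finset (ZMod p)).subset_univ), sum_singleton,
            zero_pow hn.ne', add_zero]
      _ = ∑ x : (ZMod p)ˣ, ((x : ZMod p) ^ n) := by
          rw [← hembed, Finset.sum_map]; rfl
  set T : ZMod p := ∑ x : (ZMod p)ˣ, (1 + (x : ZMod p)) ^ n with hT
  have way2 : T = (if (p - 1) ∣ n then -1 else 0) - 1 := by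
    have h1 : (∑ b : ZMod p, (1 + b) ^ n) = ∑ b : ZMod p, b ^ n :=
      Fintype.sum_equiv (Equiv.addLeft (1 : ZMod p)) _ _ (fun b => rfl)
    have h2 : (∑ b : ZMod p, (1 + b) ^ n) = T + 1 := by
      calc (∑ b : ZMod p, (1 + b) ^ n)
          = ∑ b ∈ univ \ {(0 : ZMod p)}, (1 + b) ^ n + ∑ b ∈ {(0 : ZMod p)}, (1 + b) ^ n := by
            rw [sum_sdiff (({0} : Finset (ZMod p)).subset_univ)]
        _ = T + 1 := by
            rw [← hembed, Finset.sum_map, sum_singleton]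
            simp [hT]
    rw [← hfield, ← h1, h2]; ring
  have way1 : T = -(1 + S) := by
    have hexp : ∀ x : (ZMod p)ˣ, (1 + (x : ZMod p)) ^ n
        = ∑ j ∈ range (n + 1), (x : ZMod p) ^ j * (n.choose j : ZMod p) := by
      intro x
      rw [add_comm, add_pow]
      simp [one_pow, mul_comm]
    calc T = ∑ j ∈ range (n + 1),
          (∑ x : (ZMod p)ˣ, ((x : ZMod p) ^ j)) * (n.choose j : ZMod p) := by
          rw [hT]
          simp_rw [hexp]
          rw [Finset.sum_comm]
          simp [Finset.sum_mul]
      _ = ∑ j ∈ range (n + 1), (if (p - 1) ∣ j then -(n.choose j : ZMod p) else 0) := by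
          refine Finset.sum_congr rfl fun j _ => ?_
          rw [hunits j]
          split_ifs <;> ring
      _ = -∑ j ∈ (range (n + 1)).filter (fun j => (p - 1) ∣ j), (n.choose j : ZMod p) := by
          rw [← Finset.sum_neg_distrib, Finset.sum_filter]
      _ = -∑ k ∈ range (K + 1), (n.choose (k * (p - 1)) : ZMod p) := by
          congr 1
          refine Finset.sum_nbij' (fun j => j / (p - 1)) (fun k => k * (p - 1))
            ?_ ?_ ?_ ?_ ?_
          · intro j hj
            simp only [mem_filter, mem_range] at hj
            simp only [mem_range]
            have h1 : j ≤ n := by omega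
            have := Nat.div_le_div_right (c := p - 1) h1
            omega
          · intro k hk
            simp only [mem_range] at hk
            simp only [mem_filter, mem_range]
            refine ⟨Nat.lt_succ_of_le ?_, dvd_mul_left _ _⟩
            calc k * (p - 1) ≤ K * (p - 1) :=
                  Nat.mul_le_mul_right _ (Nat.lt_succ_iff.mp hk)
              _ ≤ n := Nat.div_mul_le_self n (p - 1)
          · intro j hj
            exact Nat.div_mul_cancel (Finset.mem_filter.mp hj).2
          · intro k _
            exact Nat.mul_div_cancel k hp1
          · intro j hj
            rw [Nat.div_mul_cancel (Finset.mem_filter.mp hj).2]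
      _ = -(1 + S) := by
          congr 1
          rw [hins K, Finset.sum_insert (by simp), hS, Nat.cast_sum]
          simp
  rw [way2] at way1
  split_ifs at way1 ⊢ with hd
  · linear_combination way1
  · linear_combination way1
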